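/- Let m > m' be real numbers with m > 0, let c > 0, R ≥ 1, and let b : ℝ → ℝ be a continuous 2π-periodic function that changes sign (there exist t₀, t₁ with b(t₀) < 0 and b(t₁) > 0). For each n ∈ ℕ let β_n : ℝ → ℝ be a continuous function with |β_n(t)| ≤ c·n^{m'} for all t ∈ ℝ. Then for every D > 0 there exists n₀ ∈ ℕ such that for every natural number n ≥ n₀: (i) there exist t ∈ ℝ and an open interval I⁺ ⊂ [t, t+2π] with |I⁺| ≥ (nR)^{-m} such that ∫_s^t (n^m b(τ) + β_n(τ)) dτ > D·log(nR) for every s ∈ I⁺; and (ii) there exist t' ∈ ℝ and an open interval I⁻ ⊂ [t'−2π, t'] with |I⁻| ≥ (nR)^{-m} such that ∫_s^{t'} (n^m b(τ) + β_n(τ)) dτ > D·log(nR) for every s ∈ I⁻. -/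

import Mathlib

open Filter Real Set

private lemma aux_int_le (f : ℝ → ℝ) (hf : Continuous f) {a s K : ℝ} (has : a ≤ s)
    (h : ∀ τ ∈ Set.Icc a s, f τ ≤ K) : ∫ τ in a..s, f τ ≤ K * (s - a) := by
  have := intervalIntegral.integral_mono_on (μ := MeasureTheory.volume) (g := fun _ => K) has (hf.intervalIntegrable a s)
    (intervalIntegrable_const) h
  simpa [mul_comm] using this

private lemma aux_le_int (f : ℝ → ℝ) (hf : Continuous f) {a s K : ℝ} (has : a ≤ s)
    (h : ∀ τ ∈ Set.Icc a s, K ≤ f τ) : K * (s - a) ≤ ∫ τ in a..s, f τ := by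
  have := intervalIntegral.integral_mono_on (μ := MeasureTheory.volume) (f := fun _ => K) has intervalIntegrable_const
    (hf.intervalIntegrable a s) h
  simpa [mul_comm] using this

private lemma aux_tendsto (m m' : ℝ) (hm : 0 < m) (hmm' : m' < m) (a c d : ℝ) (ha : 0 < a) :
    Tendsto (fun x : ℝ => a * x ^ m - c * x ^ m' - d * Real.log x) atTop atTop := by
  have h1 : Tendsto (fun x : ℝ => x ^ (m' - m)) atTop (nhds 0) := by
    have := tendsto_rpow_neg_atTop (y := m - m') (by linarith)
    simpa [neg_sub] using this
  have h2 : Tendsto (fun x : ℝ => Real.log x / x ^ m) atTop (nhds 0) :=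
    (isLittleO_log_rpow_atTop hm).tendsto_div_nhds_zero
  have h3 : Tendsto (fun x : ℝ => a - c * x ^ (m' - m) - d * (Real.log x / x ^ m))
      atTop (nhds a) := by
    have := ((tendsto_const_nhds (x := a)).sub (h1.const_mul c)).sub (h2.const_mul d)
    simpa using this
  have h4 : Tendsto (fun x : ℝ => x ^ m) atTop atTop := tendsto_rpow_atTop hm
  have h5 := h4.atTop_mul_pos ha h3
  refine h5.congr' ?_
  filter_upwards [eventually_gt_atTop (0 : ℝ)] with x hx
  have hxm : x ^ m ≠ 0 := ne_of_gt (Real.rpow_pos_of_pos hx m)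
  have hmul : x ^ (m' - m) * x ^ m = x ^ m' := by
    rw [← Real.rpow_add hx]; ring_nf
  have hdiv : Real.log x / x ^ m * x ^ m = Real.log x := div_mul_cancel₀ _ hxm
  calc x ^ m * (a - c * x ^ (m' - m) - d * (Real.log x / x ^ m))
      = a * x ^ m - c * (x ^ (m' - m) * x ^ m) - d * (Real.log x / x ^ m * x ^ m) := by ring
    _ = a * x ^ m - c * x ^ m' - d * Real.log x := by rw [hmul, hdiv]

/-- For a symbol of order `m` with sign-changing positively homogeneous principal part
`n^m b(t)` and lower-order perturbations `β_n` of order `m' < m`, both conditions `(α)_D^+`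
and `(α)_D^-` fail at frequencies of size `nR` for all large `n`. -/
theorem stmt_14 (m m' c R : ℝ) (hm : 0 < m) (hmm' : m' < m) (hc : 0 < c) (hR : 1 ≤ R)
    (b : ℝ → ℝ) (hb : Continuous b) (hbp : Function.Periodic b (2 * Real.pi))
    (t₀ t₁ : ℝ) (hneg : b t₀ < 0) (hpos : 0 < b t₁)
    (β : ℕ → ℝ → ℝ) (hβc : ∀ n : ℕ, Continuous (β n))
    (hβ : ∀ n : ℕ, ∀ t : ℝ, |β n t| ≤ c * (n : ℝ) ^ m') :
    ∀ D : ℝ, 0 < D → ∃ n₀ : ℕ, ∀ n : ℕ, n₀ ≤ n →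
      (∃ t : ℝ, ∃ p q : ℝ, Set.Ioo p q ⊆ Set.Icc t (t + 2 * Real.pi) ∧
        ((n : ℝ) * R) ^ (-m) ≤ q - p ∧
        ∀ s ∈ Set.Ioo p q,
          D * Real.log ((n : ℝ) * R) <
            ∫ τ in s..t, ((n : ℝ) ^ m * b τ + β n τ)) ∧
      (∃ t' : ℝ, ∃ p q : ℝ, Set.Ioo p q ⊆ Set.Icc (t' - 2 * Real.pi) t' ∧
        ((n : ℝ) * R) ^ (-m) ≤ q - p ∧
        ∀ s ∈ Set.Ioo p q,
          D * Real.log ((n : ℝ) * R) <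
            ∫ τ in s..t', ((n : ℝ) ^ m * b τ + β n τ)) := by
  intro D hD
  -- a negative interval for b, near t₀
  have hev0 : ∀ᶠ τ in nhds t₀, b τ < b t₀ / 2 :=
    hb.continuousAt.eventually_lt continuousAt_const (by linarith)
  obtain ⟨δ₀, hδ₀, h0⟩ := Metric.eventually_nhds_iff.mp hev0
  -- a positive interval for b, near t₁
  have hev1 : ∀ᶠ τ in nhds t₁, b t₁ / 2 < b τ :=
    continuousAt_const.eventually_lt hb.continuousAt (by linarith)
  obtain ⟨δ₁, hδ₁, h1⟩ := Metric.eventually_nhds_iff.mp hev1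
  set ε : ℝ := -(b t₀) / 2 with hεdef
  set ε' : ℝ := b t₁ / 2 with hε'def
  have hεpos : 0 < ε := by simp only [hεdef]; linarith
  have hε'pos : 0 < ε' := by simp only [hε'def]; linarith
  set δ : ℝ := min (δ₀ / 2) Real.pi with hδdef
  set δ' : ℝ := min (δ₁ / 2) Real.pi with hδ'def
  have hπ : 0 < Real.pi := Real.pi_pos
  have hδpos : 0 < δ := lt_min (by linarith) hπ
  have hδ'pos : 0 < δ' := lt_min (by linarith) hπ
  have hδπ : δ ≤ Real.pi := min_le_right _ _
  have hδ'π : δ' ≤ Real.pi := min_le_right _ _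
  have hbneg : ∀ τ ∈ Set.Icc t₀ (t₀ + δ), b τ ≤ -ε := by
    intro τ hτ
    have hd : dist τ t₀ < δ₀ := by
      rw [Real.dist_eq, abs_lt]
      have h1' := hτ.1; have h2' := hτ.2
      have := min_le_left (δ₀ / 2) Real.pi
      constructor <;> [linarith; linarith]
    have := h0 hd
    simp only [hεdef]; linarith
  have hbpos' : ∀ τ ∈ Set.Icc (t₁ - δ') t₁, ε' ≤ b τ := by
    intro τ hτ
    have hd : dist τ t₁ < δ₁ := by
      rw [Real.dist_eq, abs_lt]
      have h1' := hτ.1; have h2' := hτ.2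
      have := min_le_left (δ₁ / 2) Real.pi
      constructor <;> [linarith; linarith]
    have := h1 hd
    simp only [hε'def]; linarith
  set εm : ℝ := min ε ε' with hεm
  set δm : ℝ := min δ δ' with hδm
  have hεmpos : 0 < εm := lt_min hεpos hε'pos
  have hδmpos : 0 < δm := lt_min hδpos hδ'pos
  -- eventual conditions in ℝ
  have T1 : Tendsto (fun x : ℝ => δm / 2 * εm * x ^ m - δm / 2 * c * x ^ m' - D * Real.log x)
      atTop atTop := aux_tendsto m m' hm hmm' _ _ _ (by positivity)
  have E1 := T1.eventually_gt_atTop (D * Real.log R)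
  have T2 : Tendsto (fun x : ℝ => εm * x ^ m - c * x ^ m' - 0 * Real.log x) atTop atTop :=
    aux_tendsto m m' hm hmm' _ _ _ hεmpos
  have E2 := T2.eventually_gt_atTop 0
  have E3 := (tendsto_rpow_neg_atTop hm).eventually_lt_const (by positivity : (0:ℝ) < δm / 2)
  have E4 := eventually_ge_atTop (1 : ℝ)
  have EN := tendsto_natCast_atTop_atTop (R := ℝ) |>.eventually (((E1.and E2).and E3).and E4)
  obtain ⟨n₀, hn₀⟩ := eventually_atTop.mp EN
  refine ⟨n₀, fun n hn => ?_⟩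
  obtain ⟨⟨⟨hE1, hE2⟩, hE3⟩, hE4⟩ := hn₀ n hn
  set x : ℝ := (n : ℝ) with hxdef
  have hx0 : 0 < x := by linarith
  have hxm0 : (0:ℝ) ≤ x ^ m := Real.rpow_nonneg hx0.le m
  simp only [zero_mul, sub_zero] at hE2
  -- basic consequences
  have hlog : Real.log (x * R) = Real.log x + Real.log R :=
    Real.log_mul (by linarith) (by linarith)
  have hDlog : D * Real.log (x * R) < δm / 2 * (εm * x ^ m - c * x ^ m') := by
    rw [hlog]
    have hre : δm / 2 * (εm * x ^ m - c * x ^ m') = δm / 2 * εm * x ^ m - δm / 2 * c * x ^ m' := by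
      ring
    rw [hre]; nlinarith [hE1]
  have hpow : (x * R) ^ (-m) ≤ δm / 2 := by
    have hxR : x ≤ x * R := le_mul_of_one_le_right hx0.le hR
    have h1' : (x * R) ^ (-m) ≤ x ^ (-m) := by
      rw [Real.rpow_neg (by linarith), Real.rpow_neg hx0.le]
      exact inv_anti₀ (Real.rpow_pos_of_pos hx0 m)
        (Real.rpow_le_rpow hx0.le hxR hm.le)
    linarith [hE3]
  have hcont : Continuous (fun τ : ℝ => x ^ m * b τ + β n τ) :=
    (continuous_const.mul hb).add (hβc n)
  constructor
  · -- part (i): use the negative interval to the right of t₀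
    refine ⟨t₀, t₀ + δ / 2, t₀ + δ, ?_, ?_, ?_⟩
    · intro y hy
      exact ⟨by linarith [hy.1, hδpos.le], by linarith [hy.2, hδπ, hπ]⟩
    · have : δm ≤ δ := min_le_left _ _
      have : δm / 2 ≤ t₀ + δ - (t₀ + δ / 2) := by linarith
      linarith [hpow]
    · intro s hs
      have hts : t₀ ≤ s := by linarith [hs.1, hδpos]
      have hbound : ∀ τ ∈ Set.Icc t₀ s, x ^ m * b τ + β n τ ≤ x ^ m * (-ε) + c * x ^ m' := by
        intro τ hτ
        have hb' := hbneg τ ⟨hτ.1, le_trans hτ.2 hs.2.le⟩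
        have hβ' := (abs_le.mp (hβ n τ)).2
        have := mul_le_mul_of_nonneg_left hb' hxm0
        linarith
      have hint := aux_int_le _ hcont hts hbound
      rw [intervalIntegral.integral_symm]
      have hKK : εm * x ^ m - c * x ^ m' ≤ ε * x ^ m - c * x ^ m' := by
        have := mul_le_mul_of_nonneg_right (min_le_left ε ε') hxm0
        linarith
      have hstep : δm / 2 * (εm * x ^ m - c * x ^ m') ≤ (s - t₀) * (ε * x ^ m - c * x ^ m') := by
        have h2 : δm ≤ δ := min_le_left _ _
        have h3 : δm / 2 ≤ s - t₀ := by linarith [hs.1]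
        exact mul_le_mul h3 hKK hE2.le (by linarith)
      have heq : (x ^ m * (-ε) + c * x ^ m') * (s - t₀)
          = -((s - t₀) * (ε * x ^ m - c * x ^ m')) := by ring
      rw [heq] at hint
      linarith [hDlog, hstep, hint]
  · -- part (ii): use the positive interval to the left of t₁
    refine ⟨t₁, t₁ - δ', t₁ - δ' / 2, ?_, ?_, ?_⟩
    · intro y hy
      exact ⟨by linarith [hy.1, hδ'π, hπ], by linarith [hy.2, hδ'pos]⟩
    · have : δm ≤ δ' := min_le_right _ _
      have : δm / 2 ≤ t₁ - δ' / 2 - (t₁ - δ') := by linarith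
      linarith [hpow]
    · intro s hs
      have hts : s ≤ t₁ := by linarith [hs.2, hδ'pos]
      have hbound : ∀ τ ∈ Set.Icc s t₁, x ^ m * ε' - c * x ^ m' ≤ x ^ m * b τ + β n τ := by
        intro τ hτ
        have hb' := hbpos' τ ⟨le_trans hs.1.le hτ.1, hτ.2⟩
        have hβ' := (abs_le.mp (hβ n τ)).1
        have := mul_le_mul_of_nonneg_left hb' hxm0
        linarith
      have hint := aux_le_int _ hcont hts hbound
      have hKK : εm * x ^ m - c * x ^ m' ≤ ε' * x ^ m - c * x ^ m' := by
        have := mul_le_mul_of_nonneg_right (min_le_right ε ε') hxm0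
        linarith
      have hstep : δm / 2 * (εm * x ^ m - c * x ^ m') ≤ (t₁ - s) * (ε' * x ^ m - c * x ^ m') := by
        have h2 : δm ≤ δ' := min_le_right _ _
        have h3 : δm / 2 ≤ t₁ - s := by linarith [hs.2]
        exact mul_le_mul h3 hKK hE2.le (by linarith)
      have heq : (x ^ m * ε' - c * x ^ m') * (t₁ - s)
          = (t₁ - s) * (ε' * x ^ m - c * x ^ m') := by ring
      rw [heq] at hint
      linarith [hDlog, hstep, hint]
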